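/- The θ-derivative of the stationary density lies in the kernel of the linearized operator: L(∂θq)(θ, ω) = 0 for all θ ∈ ℝ and ω ∈ {−ω₀, ω₀}. -/

import Mathlib

noncomputable section

open MeasureTheory

/-- `G u ω x = x·cos u + 2ωu`. -/
def G (u ω x : ℝ) : ℝ := x * Real.cos u + 2 * ω * u

/-- The unnormalized stationary profile `S(θ, ω, x)`. -/
def S (θ ω x : ℝ) : ℝ :=
  Real.exp (G θ ω x) *
    ((1 - Real.exp (4 * Real.pi * ω)) * (∫ u in (0:ℝ)..θ, Real.exp (-(G u ω x))) +
      Real.exp (4 * Real.pi * ω) * (∫ u in (0:ℝ)..(2 * Real.pi), Real.exp (-(G u ω x))))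

/-- The normalization constant `Z(ω, x)`. -/
def Z (ω x : ℝ) : ℝ := ∫ θ in (0:ℝ)..(2 * Real.pi), S θ ω x

/-- `Ψ_μ` for the binary disorder law `μ = (1/2)(δ_{-ω₀} + δ_{ω₀})`. -/
def psiMu (ω₀ x : ℝ) : ℝ :=
  (1 / 2) * ((∫ θ in (0:ℝ)..(2 * Real.pi), Real.cos θ * S θ (-ω₀) x) / Z (-ω₀) x +
    (∫ θ in (0:ℝ)..(2 * Real.pi), Real.cos θ * S θ ω₀ x) / Z ω₀ x)

/-- The stationary density `q(θ, ω) = S(θ, ω, 2Kr)/Z(ω, 2Kr)`. -/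
def q (K r θ ω : ℝ) : ℝ := S θ ω (2 * K * r) / Z ω (2 * K * r)

/-- `κ(ω) = (1 − exp(4πω))/(2 Z(ω, 2Kr))`. -/
def kap (K r ω : ℝ) : ℝ := (1 - Real.exp (4 * Real.pi * ω)) / (2 * Z ω (2 * K * r))

/-- The averaged convolution `⟨J∗h⟩_μ(θ)` for binary disorder. -/
def Jconv (K ω₀ : ℝ) (h : ℝ → ℝ → ℝ) (θ : ℝ) : ℝ :=
  -(K / 2) * ((∫ φ in (0:ℝ)..(2 * Real.pi), Real.sin φ * h (θ - φ) (-ω₀)) +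
    (∫ φ in (0:ℝ)..(2 * Real.pi), Real.sin φ * h (θ - φ) ω₀))

/-- The linearized evolution operator `L` around the stationary density `q`. -/
def Lop (K ω₀ r : ℝ) (h : ℝ → ℝ → ℝ) (θ ω : ℝ) : ℝ :=
  (1 / 2) * deriv (deriv (fun u => h u ω)) θ -
    deriv (fun u => h u ω * (Jconv K ω₀ (q K r) u + ω) + q K r u ω * Jconv K ω₀ h u) θ

noncomputable def Fe (ω x θ : ℝ) : ℝ := ∫ u in (0:ℝ)..θ, Real.exp (-(G u ω x))

lemma contEG (ω x : ℝ) : Continuous fun u => Real.exp (-(G u ω x)) := by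
  unfold G; fun_prop

lemma hFe (ω x θ : ℝ) : HasDerivAt (Fe ω x) (Real.exp (-(G θ ω x))) θ :=
  intervalIntegral.integral_hasDerivAt_right ((contEG ω x).intervalIntegrable _ _)
    ((contEG ω x).stronglyMeasurableAtFilter _ _) (contEG ω x).continuousAt

lemma S_eq (θ ω x : ℝ) : S θ ω x = Real.exp (G θ ω x) *
    ((1 - Real.exp (4 * Real.pi * ω)) * Fe ω x θ +
      Real.exp (4 * Real.pi * ω) * Fe ω x (2 * Real.pi)) := rfl

lemma hG (ω x θ : ℝ) : HasDerivAt (fun t => G t ω x) (x * (-Real.sin θ) + 2 * ω) θ := by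
  have h1 : HasDerivAt (fun t => x * Real.cos t) (x * (-Real.sin θ)) θ :=
    (Real.hasDerivAt_cos θ).const_mul x
  have h2 : HasDerivAt (fun t : ℝ => 2 * ω * t) (2 * ω) θ := by
    simpa using (hasDerivAt_id θ).const_mul (2 * ω)
  exact h1.add h2

lemma hS (ω x θ : ℝ) : HasDerivAt (fun t => S t ω x)
    ((x * (-Real.sin θ) + 2 * ω) * S θ ω x + (1 - Real.exp (4 * Real.pi * ω))) θ := by
  have hE : HasDerivAt (fun t => Real.exp (G t ω x))
      (Real.exp (G θ ω x) * (x * (-Real.sin θ) + 2 * ω)) θ := (hG ω x θ).exp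
  have hB : HasDerivAt (fun t => (1 - Real.exp (4 * Real.pi * ω)) * Fe ω x t +
      Real.exp (4 * Real.pi * ω) * Fe ω x (2 * Real.pi))
      ((1 - Real.exp (4 * Real.pi * ω)) * Real.exp (-(G θ ω x))) θ :=
    ((hFe ω x θ).const_mul _).add_const _
  have := hE.mul hB
  change HasDerivAt (fun t => S t ω x) _ θ at this
  convert this using 1
  have h1 : Real.exp (G θ ω x) *
      ((1 - Real.exp (4 * Real.pi * ω)) * Real.exp (-(G θ ω x)))
      = 1 - Real.exp (4 * Real.pi * ω) := by
    rw [show Real.exp (G θ ω x) * ((1 - Real.exp (4 * Real.pi * ω)) * Real.exp (-(G θ ω x)))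
        = (1 - Real.exp (4 * Real.pi * ω)) * (Real.exp (-(G θ ω x)) * Real.exp (G θ ω x)) from by
        ring, ← Real.exp_add]
    simp
  rw [h1, S_eq]
  ring

lemma Fe_nonneg {ω x θ : ℝ} (hθ : 0 ≤ θ) : 0 ≤ Fe ω x θ :=
  intervalIntegral.integral_nonneg hθ (fun u _ => (Real.exp_pos _).le)

lemma Fe_pos {ω x θ : ℝ} (hθ : 0 < θ) : 0 < Fe ω x θ :=
  intervalIntegral.intervalIntegral_pos_of_pos_on ((contEG ω x).intervalIntegrable _ _)
    (fun u _ => Real.exp_pos _) hθ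

lemma Fe_add (ω x a b : ℝ) : Fe ω x (a + b) = Fe ω x a + ∫ u in a..(a+b), Real.exp (-(G u ω x)) :=
  (intervalIntegral.integral_add_adjacent_intervals ((contEG ω x).intervalIntegrable _ _)
    ((contEG ω x).intervalIntegrable _ _)).symm

lemma Fe_mono {ω x a b : ℝ} (hab : a ≤ b) : Fe ω x a ≤ Fe ω x b := by
  have := Fe_add ω x a (b - a)
  simp only [add_sub_cancel] at this
  rw [this]
  have : 0 ≤ ∫ u in a..b, Real.exp (-(G u ω x)) :=
    intervalIntegral.integral_nonneg hab (fun u _ => (Real.exp_pos _).le)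
  linarith

lemma Fe_strict {ω x a b : ℝ} (hab : a < b) : Fe ω x a < Fe ω x b := by
  have := Fe_add ω x a (b - a)
  simp only [add_sub_cancel] at this
  rw [this]
  have : 0 < ∫ u in a..b, Real.exp (-(G u ω x)) :=
    intervalIntegral.intervalIntegral_pos_of_pos_on ((contEG ω x).intervalIntegrable _ _)
      (fun u _ => Real.exp_pos _) hab
  linarith

lemma S_pos_on {ω x θ : ℝ} (h0 : 0 ≤ θ) (h2 : θ ≤ 2 * Real.pi) : 0 < S θ ω x := by
  rw [S_eq]
  apply mul_pos (Real.exp_pos _)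
  have key : (1 - Real.exp (4 * Real.pi * ω)) * Fe ω x θ +
      Real.exp (4 * Real.pi * ω) * Fe ω x (2 * Real.pi)
      = Fe ω x θ + Real.exp (4 * Real.pi * ω) * (Fe ω x (2 * Real.pi) - Fe ω x θ) := by ring
  rw [key]
  rcases eq_or_lt_of_le h0 with h | h
  · rcases eq_or_lt_of_le h2 with h' | h'
    · exfalso; rw [← h] at h'; nlinarith [Real.pi_pos]
    · have := Fe_strict (ω := ω) (x := x) h'
      have hnn := Fe_nonneg (ω := ω) (x := x) h0
      nlinarith [Real.exp_pos (4 * Real.pi * ω)]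
  · rcases eq_or_lt_of_le h2 with h' | h'
    · have := Fe_pos (ω := ω) (x := x) h
      have := Fe_mono (ω := ω) (x := x) h2
      nlinarith [Real.exp_pos (4 * Real.pi * ω)]
    · have := Fe_pos (ω := ω) (x := x) h
      have := Fe_strict (ω := ω) (x := x) h'
      nlinarith [Real.exp_pos (4 * Real.pi * ω)]

lemma cont_S (ω x : ℝ) : Continuous fun θ => S θ ω x := by
  rw [continuous_iff_continuousAt]
  exact fun θ => (hS ω x θ).continuousAt

lemma Z_pos (ω x : ℝ) : 0 < Z ω x := by
  apply intervalIntegral.intervalIntegral_pos_of_pos_on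
  · exact (cont_S ω x).intervalIntegrable _ _
  · exact fun u hu => S_pos_on hu.1.le hu.2.le
  · positivity

lemma G_add (u ω x : ℝ) : G (u + 2 * Real.pi) ω x = G u ω x + 4 * Real.pi * ω := by
  unfold G; rw [Real.cos_add_two_pi]; ring

lemma G_neg (u ω x : ℝ) : G u (-ω) x = G (-u) ω x := by
  unfold G; rw [Real.cos_neg]; ring

lemma Fe_shift (ω x θ : ℝ) : Fe ω x (θ + 2 * Real.pi) =
    Fe ω x (2 * Real.pi) + Real.exp (-(4 * Real.pi * ω)) * Fe ω x θ := by
  rw [add_comm θ, Fe_add ω x (2 * Real.pi) θ]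
  congr 1
  rw [show (2 * Real.pi : ℝ) = 0 + 2 * Real.pi from by ring,
    show (0:ℝ) + 2 * Real.pi + θ = θ + 2 * Real.pi from by ring,
    ← intervalIntegral.integral_comp_add_right (fun u => Real.exp (-(G u ω x))) (2 * Real.pi)]
  rw [show Real.exp (-(4 * Real.pi * ω)) * Fe ω x θ
      = ∫ u in (0:ℝ)..θ, Real.exp (-(4 * Real.pi * ω)) * Real.exp (-(G u ω x)) from
    (intervalIntegral.integral_const_mul _ _).symm]
  apply intervalIntegral.integral_congr
  intro u _
  simp only [G_add, ← Real.exp_add]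
  ring_nf

lemma exp_mul_exp_neg (a : ℝ) : Real.exp a * Real.exp (-a) = 1 := by
  rw [← Real.exp_add]; simp

lemma S_periodic (ω x : ℝ) : Function.Periodic (fun θ => S θ ω x) (2 * Real.pi) := by
  intro θ
  simp only [S_eq, G_add, Fe_shift, Real.exp_add]
  have he := exp_mul_exp_neg (4 * Real.pi * ω)
  linear_combination (Real.exp (G θ ω x) * (1 - Real.exp (4 * Real.pi * ω)) * Fe ω x θ) * he

lemma Fe_neg (ω x θ : ℝ) : Fe (-ω) x (-θ) = -(Fe ω x θ) := by
  unfold Fe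
  rw [show (∫ u in (0:ℝ)..(-θ), Real.exp (-(G u (-ω) x)))
      = ∫ u in (0:ℝ)..(-θ), (fun t => Real.exp (-(G t ω x))) (-u) from by
    apply intervalIntegral.integral_congr; intro u _; simp [G_neg]]
  rw [intervalIntegral.integral_comp_neg (fun t => Real.exp (-(G t ω x)))]
  rw [show -(-θ) = θ from neg_neg θ, show -(0:ℝ) = 0 from neg_zero]
  exact intervalIntegral.integral_symm 0 θ

lemma Fe_neg_2pi (ω x : ℝ) : Fe (-ω) x (2 * Real.pi) =
    Real.exp (4 * Real.pi * ω) * Fe ω x (2 * Real.pi) := by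
  unfold Fe
  rw [show (∫ u in (0:ℝ)..(2 * Real.pi), Real.exp (-(G u (-ω) x)))
      = ∫ u in (0:ℝ)..(2 * Real.pi),
          Real.exp (4 * Real.pi * ω) * (fun t => Real.exp (-(G t ω x))) (2 * Real.pi - u) from by
    apply intervalIntegral.integral_congr; intro u _
    have : G u (-ω) x = G (2 * Real.pi - u) ω x - 4 * Real.pi * ω := by
      rw [G_neg]
      rw [show 2 * Real.pi - u = -u + 2 * Real.pi from by ring, G_add]
      ring
    simp only [this, ← Real.exp_add]
    ring_nf]
  rw [intervalIntegral.integral_const_mul,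
    intervalIntegral.integral_comp_sub_left (fun t => Real.exp (-(G t ω x))) (2 * Real.pi)]
  norm_num

lemma Sneg (ω x θ : ℝ) : S (-θ) (-ω) x = Real.exp (-(4 * Real.pi * ω)) * S θ ω x := by
  have h4 : (4 : ℝ) * Real.pi * -ω = -(4 * Real.pi * ω) := by ring
  rw [S_eq, S_eq, G_neg, h4, Fe_neg, Fe_neg_2pi, neg_neg]
  have he := exp_mul_exp_neg (4 * Real.pi * ω)
  linear_combination (Real.exp (G θ ω x) * Fe ω x θ) * he

lemma Zneg (ω x : ℝ) : Z (-ω) x = Real.exp (-(4 * Real.pi * ω)) * Z ω x := by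
  unfold Z
  rw [show (∫ θ in (0:ℝ)..(2 * Real.pi), S θ (-ω) x)
      = ∫ θ in (0:ℝ)..(2 * Real.pi), Real.exp (-(4 * Real.pi * ω)) * (fun t => S t ω x) (-θ) from by
    apply intervalIntegral.integral_congr; intro θ _
    have := Sneg ω x (-θ)
    rw [neg_neg] at this
    simpa using this]
  rw [intervalIntegral.integral_const_mul, intervalIntegral.integral_comp_neg (fun t => S t ω x)]
  congr 1
  have := (S_periodic ω x).intervalIntegral_add_eq (-(2 * Real.pi)) 0
  simpa using this

lemma Ic_neg (ω x : ℝ) : (∫ θ in (0:ℝ)..(2*Real.pi), Real.cos θ * S θ (-ω) x)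
    = Real.exp (-(4*Real.pi*ω)) * ∫ θ in (0:ℝ)..(2*Real.pi), Real.cos θ * S θ ω x := by
  rw [show (∫ θ in (0:ℝ)..(2*Real.pi), Real.cos θ * S θ (-ω) x)
      = ∫ θ in (0:ℝ)..(2*Real.pi),
          Real.exp (-(4*Real.pi*ω)) * ((fun t => Real.cos t * S t ω x) (-θ)) from by
    apply intervalIntegral.integral_congr; intro θ _
    have h := Sneg ω x (-θ); rw [neg_neg] at h
    simp only [h, Real.cos_neg]; ring]
  rw [intervalIntegral.integral_const_mul,
    intervalIntegral.integral_comp_neg (a := (0:ℝ)) (b := 2*Real.pi) (fun t => Real.cos t * S t ω x)]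
  congr 1
  have hper : Function.Periodic (fun t => Real.cos t * S t ω x) (2*Real.pi) :=
    Real.cos_periodic.mul (S_periodic ω x)
  have := hper.intervalIntegral_add_eq (-(2*Real.pi)) 0
  simpa using this

lemma Is_neg (ω x : ℝ) : (∫ θ in (0:ℝ)..(2*Real.pi), Real.sin θ * S θ (-ω) x)
    = -(Real.exp (-(4*Real.pi*ω)) * ∫ θ in (0:ℝ)..(2*Real.pi), Real.sin θ * S θ ω x) := by
  rw [show (∫ θ in (0:ℝ)..(2*Real.pi), Real.sin θ * S θ (-ω) x)
      = ∫ θ in (0:ℝ)..(2*Real.pi),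
          -(Real.exp (-(4*Real.pi*ω)) * ((fun t => Real.sin t * S t ω x) (-θ))) from by
    apply intervalIntegral.integral_congr; intro θ _
    have h := Sneg ω x (-θ); rw [neg_neg] at h
    simp only [h, Real.sin_neg]; ring]
  rw [intervalIntegral.integral_neg, intervalIntegral.integral_const_mul,
    intervalIntegral.integral_comp_neg (a := (0:ℝ)) (b := 2*Real.pi) (fun t => Real.sin t * S t ω x)]
  congr 2
  have hper : Function.Periodic (fun t => Real.sin t * S t ω x) (2*Real.pi) :=
    Real.sin_periodic.mul (S_periodic ω x)
  have := hper.intervalIntegral_add_eq (-(2*Real.pi)) 0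
  simpa using this

lemma conv_sin (f : ℝ → ℝ) (hf : Continuous f) (hper : Function.Periodic f (2*Real.pi)) (θ : ℝ) :
    (∫ φ in (0:ℝ)..(2*Real.pi), Real.sin φ * f (θ - φ))
      = Real.sin θ * (∫ u in (0:ℝ)..(2*Real.pi), Real.cos u * f u)
        - Real.cos θ * (∫ u in (0:ℝ)..(2*Real.pi), Real.sin u * f u) := by
  have hg : Function.Periodic (fun u => Real.sin (θ - u) * f u) (2*Real.pi) := by
    intro t
    simp only []
    rw [show θ - (t + 2*Real.pi) = (θ - t) - 2*Real.pi from by ring, Real.sin_sub_two_pi, hper t]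
  have h1 : (∫ φ in (0:ℝ)..(2*Real.pi), Real.sin φ * f (θ - φ))
      = ∫ φ in (0:ℝ)..(2*Real.pi), (fun u => Real.sin (θ - u) * f u) (θ - φ) := by
    apply intervalIntegral.integral_congr; intro φ _; simp [sub_sub_cancel]
  rw [h1, intervalIntegral.integral_comp_sub_left (fun u => Real.sin (θ - u) * f u) θ]
  have h2 := hg.intervalIntegral_add_eq (θ - 2*Real.pi) 0
  rw [show θ - 2*Real.pi + 2*Real.pi = θ from by ring, zero_add] at h2
  rw [sub_zero, h2]
  rw [intervalIntegral.integral_congr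
    (g := fun u => Real.sin θ * (Real.cos u * f u) - Real.cos θ * (Real.sin u * f u))
    (fun u _ => by simp only [Real.sin_sub]; ring)]
  rw [intervalIntegral.integral_sub
      (f := fun u => Real.sin θ * (Real.cos u * f u)) (g := fun u => Real.cos θ * (Real.sin u * f u))
      ((continuous_const.mul (Real.continuous_cos.mul hf)).intervalIntegrable _ _)
      ((continuous_const.mul (Real.continuous_sin.mul hf)).intervalIntegrable _ _),
    intervalIntegral.integral_const_mul, intervalIntegral.integral_const_mul]

lemma parts_cos (Qf pf : ℝ → ℝ) (hQ : ∀ t, HasDerivAt Qf (pf t) t) (hp : Continuous pf)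
    (hper : Qf (2*Real.pi) = Qf 0) :
    (∫ t in (0:ℝ)..(2*Real.pi), Real.cos t * pf t)
      = ∫ t in (0:ℝ)..(2*Real.pi), Real.sin t * Qf t := by
  have h := intervalIntegral.integral_mul_deriv_eq_deriv_mul
    (a := (0:ℝ)) (b := 2*Real.pi)
    (u := Real.cos) (u' := fun t => -Real.sin t) (v := Qf) (v' := pf)
    (fun t _ => Real.hasDerivAt_cos t) (fun t _ => hQ t)
    ((Real.continuous_sin.neg).intervalIntegrable _ _) (hp.intervalIntegrable _ _)
  rw [h, hper]
  simp [Real.cos_two_pi, neg_mul, intervalIntegral.integral_neg]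

lemma parts_sin (Qf pf : ℝ → ℝ) (hQ : ∀ t, HasDerivAt Qf (pf t) t) (hp : Continuous pf) :
    (∫ t in (0:ℝ)..(2*Real.pi), Real.sin t * pf t)
      = -∫ t in (0:ℝ)..(2*Real.pi), Real.cos t * Qf t := by
  have h := intervalIntegral.integral_mul_deriv_eq_deriv_mul
    (a := (0:ℝ)) (b := 2*Real.pi)
    (u := Real.sin) (u' := Real.cos) (v := Qf) (v' := pf)
    (fun t _ => Real.hasDerivAt_sin t) (fun t _ => hQ t)
    (Real.continuous_cos.intervalIntegrable _ _) (hp.intervalIntegrable _ _)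
  rw [h]
  simp [Real.sin_two_pi]

/-- The explicit formula for `∂θ q`. -/
def pF (K r ω t : ℝ) : ℝ := 2 * (-(K*r) * Real.sin t + ω) * q K r t ω + 2 * kap K r ω

lemma hq (K r ω θ : ℝ) : HasDerivAt (fun t => q K r t ω) (pF K r ω θ) θ := by
  have hZ : Z ω (2*K*r) ≠ 0 := (Z_pos ω (2*K*r)).ne'
  have h := (hS ω (2*K*r) θ).div_const (Z ω (2*K*r))
  have h2 : (fun t => q K r t ω) = fun t => S t ω (2*K*r) / Z ω (2*K*r) := rfl
  rw [h2]
  refine h.congr_deriv ?_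
  unfold pF q kap
  field_simp

lemma deriv_q (K r ω θ : ℝ) : deriv (fun t => q K r t ω) θ = pF K r ω θ := (hq K r ω θ).deriv

lemma cont_q (K r ω : ℝ) : Continuous fun t => q K r t ω :=
  (cont_S ω (2*K*r)).div_const _

lemma q_per (K r ω : ℝ) : Function.Periodic (fun t => q K r t ω) (2*Real.pi) := by
  intro t
  unfold q
  exact congrArg (· / Z ω (2*K*r)) ((S_periodic ω (2*K*r)) t)

lemma cont_pF (K r ω : ℝ) : Continuous fun t => pF K r ω t := by
  unfold pF
  exact ((by continuity : Continuous fun t : ℝ => 2 * (-(K*r) * Real.sin t + ω)).mul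
    (cont_q K r ω)).add continuous_const

lemma pF_per (K r ω : ℝ) : Function.Periodic (fun t => pF K r ω t) (2*Real.pi) := by
  intro t
  simp only [pF]
  rw [Real.sin_add_two_pi, show q K r (t + 2 * Real.pi) ω = q K r t ω from q_per K r ω t]

/-- The `θ`-derivative of the stationary density lies in the kernel of `L`. -/
theorem stmt5 (K ω₀ r : ℝ) (hK : 0 < K) (hω₀ : 0 < ω₀) (hr : 0 < r)
    (hfix : r = psiMu ω₀ (2 * K * r)) :
    ∀ θ : ℝ, ∀ ω ∈ ({-ω₀, ω₀} : Set ℝ),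
      Lop K ω₀ r (fun u ω' => deriv (fun u' => q K r u' ω') u) θ ω = 0 := by
  intro θ ω hω
  set x := 2 * K * r with hx
  have hZp : Z ω₀ x ≠ 0 := (Z_pos ω₀ x).ne'
  have hZm : Z (-ω₀) x ≠ 0 := (Z_pos (-ω₀) x).ne'
  have hE : Real.exp (-(4*Real.pi*ω₀)) ≠ 0 := Real.exp_ne_zero _
  -- cosine moments equal r
  have hIc : (∫ t in (0:ℝ)..(2*Real.pi), Real.cos t * S t (-ω₀) x) / Z (-ω₀) x
      = (∫ t in (0:ℝ)..(2*Real.pi), Real.cos t * S t ω₀ x) / Z ω₀ x := by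
    rw [Ic_neg, Zneg, mul_div_mul_left _ _ hE]
  have hrp : (∫ t in (0:ℝ)..(2*Real.pi), Real.cos t * S t ω₀ x) / Z ω₀ x = r := by
    rw [hfix]; unfold psiMu; rw [hIc]; ring
  have hrm : (∫ t in (0:ℝ)..(2*Real.pi), Real.cos t * S t (-ω₀) x) / Z (-ω₀) x = r := by
    rw [hIc, hrp]
  -- sine moments cancel
  have hIs : (∫ t in (0:ℝ)..(2*Real.pi), Real.sin t * S t (-ω₀) x) / Z (-ω₀) x
      = -((∫ t in (0:ℝ)..(2*Real.pi), Real.sin t * S t ω₀ x) / Z ω₀ x) := by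
    rw [Is_neg, Zneg]
    field_simp
  -- q-level moment identities
  have hmom : ∀ ω' : ℝ, (∫ t in (0:ℝ)..(2*Real.pi), Real.cos t * q K r t ω')
        = (∫ t in (0:ℝ)..(2*Real.pi), Real.cos t * S t ω' x) / Z ω' x
      ∧ (∫ t in (0:ℝ)..(2*Real.pi), Real.sin t * q K r t ω')
        = (∫ t in (0:ℝ)..(2*Real.pi), Real.sin t * S t ω' x) / Z ω' x := by
    intro ω'
    constructor
    · rw [intervalIntegral.integral_congr
        (g := fun t => (Z ω' x)⁻¹ * (Real.cos t * S t ω' x))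
        (fun t _ => by show Real.cos t * q K r t ω' = _; unfold q; rw [← hx]; ring),
        intervalIntegral.integral_const_mul, inv_mul_eq_div]
    · rw [intervalIntegral.integral_congr
        (g := fun t => (Z ω' x)⁻¹ * (Real.sin t * S t ω' x))
        (fun t _ => by show Real.sin t * q K r t ω' = _; unfold q; rw [← hx]; ring),
        intervalIntegral.integral_const_mul, inv_mul_eq_div]
  have hcqp : (∫ t in (0:ℝ)..(2*Real.pi), Real.cos t * q K r t ω₀) = r := by
    rw [(hmom ω₀).1, hrp]
  have hcqm : (∫ t in (0:ℝ)..(2*Real.pi), Real.cos t * q K r t (-ω₀)) = r := by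
    rw [(hmom (-ω₀)).1, hrm]
  have hsq : (∫ t in (0:ℝ)..(2*Real.pi), Real.sin t * q K r t (-ω₀))
      = -(∫ t in (0:ℝ)..(2*Real.pi), Real.sin t * q K r t ω₀) := by
    rw [(hmom (-ω₀)).2, (hmom ω₀).2, hIs]
  -- Jconv of q
  have hJq : ∀ u, Jconv K ω₀ (q K r) u = -(K*r) * Real.sin u := by
    intro u
    unfold Jconv
    rw [conv_sin (fun t => q K r t (-ω₀)) (cont_q K r (-ω₀)) (q_per K r (-ω₀)) u,
      conv_sin (fun t => q K r t ω₀) (cont_q K r ω₀) (q_per K r ω₀) u,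
      hcqp, hcqm, hsq]
    ring
  -- Jconv of ∂θ q
  have hJp : ∀ u, Jconv K ω₀ (fun t ω' => pF K r ω' t) u
      = -(K*r) * Real.cos u := by
    intro u
    unfold Jconv
    rw [conv_sin (fun t => pF K r (-ω₀) t) (cont_pF K r (-ω₀)) (pF_per K r (-ω₀)) u,
      conv_sin (fun t => pF K r ω₀ t) (cont_pF K r ω₀) (pF_per K r ω₀) u]
    have hpc : ∀ ω' : ℝ, (∫ t in (0:ℝ)..(2*Real.pi), Real.cos t * pF K r ω' t)
        = ∫ t in (0:ℝ)..(2*Real.pi), Real.sin t * q K r t ω' :=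
      fun ω' => parts_cos _ _ (hq K r ω') (cont_pF K r ω') (by simpa using q_per K r ω' 0)
    have hps : ∀ ω' : ℝ, (∫ t in (0:ℝ)..(2*Real.pi), Real.sin t * pF K r ω' t)
        = -∫ t in (0:ℝ)..(2*Real.pi), Real.cos t * q K r t ω' :=
      fun ω' => parts_sin _ _ (hq K r ω') (cont_pF K r ω')
    rw [hpc (-ω₀), hpc ω₀, hps (-ω₀), hps ω₀, hcqp, hcqm, hsq]
    ring
  -- assemble
  have hinner : (fun u => (fun t ω' => deriv (fun u' => q K r u' ω') t) u ω *
        (Jconv K ω₀ (q K r) u + ω) +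
        q K r u ω * Jconv K ω₀ (fun t ω' => deriv (fun u' => q K r u' ω') t) u)
      = fun u => (1/2) * deriv (deriv (fun u' => q K r u' ω)) u := by
    funext u
    simp only [hJp, hJq, deriv_q]
    have hw : HasDerivAt (fun t => -(K*r) * Real.sin t + ω) (-(K*r) * Real.cos u) u := by
      simpa using ((Real.hasDerivAt_sin u).const_mul (-(K*r))).add_const ω
    have hprod := (hq K r ω u).mul hw
    have hfun : (fun t => q K r t ω * (-(K*r) * Real.sin t + ω))
        = fun t => (1/2) * deriv (fun u' => q K r u' ω) t - kap K r ω := by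
      funext t
      rw [deriv_q]
      unfold pF
      ring
    have h1 : pF K r ω u * (-(K*r) * Real.sin u + ω) + q K r u ω * (-(K*r) * Real.cos u)
        = deriv (fun t => q K r t ω * (-(K*r) * Real.sin t + ω)) u := hprod.deriv.symm
    have h2 : deriv (fun t => q K r t ω * (-(K*r) * Real.sin t + ω)) u
        = (1/2) * deriv (deriv (fun u' => q K r u' ω)) u := by
      rw [hfun]
      rw [deriv_sub_const, deriv_const_mul_field]
    rw [← h2, ← h1]
  unfold Lop
  rw [hinner, deriv_const_mul_field]
  have : deriv (deriv (fun u => deriv (fun u' => q K r u' ω) u)) θ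
      = deriv (fun u => deriv (deriv (fun u' => q K r u' ω)) u) θ := rfl
  rw [this]
  ring
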